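/- Let σ be a nonincreasing zero sequence with 1 = σ(1) > σ(2) > 0 and suppose σ(n) ≤ C n^{-s} for some s, C > 0 and all n ≥ 2. Let τ be the nonincreasing rearrangement of the d-th tensor power of σ. Then for any δ ∈ (0,1] and all n ∈ ℕ: τ(n) ≤ ( exp(C^{(1+δ)/s}/δ) / n )^{α(d,δ)} where α(d,δ) = log(σ(2)^{-1}) / log( σ(2)^{-(1+δ)/s} · d ). -/

import Mathlib

open Filter Real Set


lemma aux_ptwise (δ y : ℝ) (hδ : 0 < δ) (hy : 1 ≤ y) :
    δ * (y + 1) ^ (-(1 + δ)) ≤ y ^ (-δ) - (y + 1) ^ (-δ) := by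
  have hy0 : 0 < y := by linarith
  have hy1 : 0 < y + 1 := by linarith
  have hc : (y + 1)⁻¹ ≤ Real.log ((y + 1) / y) := by
    have h := Real.log_le_sub_one_of_pos (show (0:ℝ) < ((y+1)/y)⁻¹ by positivity)
    rw [Real.log_inv] at h
    have e1 : ((y + 1) / y)⁻¹ = y / (y + 1) := by field_simp
    rw [e1] at h
    have e2 : 1 - y / (y + 1) = (y + 1)⁻¹ := by field_simp; ring
    linarith [h, e2.symm.le]
  set c := Real.log ((y + 1) / y) with hcdef
  have hkey : y ^ (-δ) = (y + 1) ^ (-δ) * Real.exp (δ * c) := by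
    rw [Real.rpow_def_of_pos hy0, Real.rpow_def_of_pos hy1, ← Real.exp_add,
      hcdef, Real.log_div (by positivity) (by positivity)]
    ring_nf
  have hexp : 1 + δ * c ≤ Real.exp (δ * c) := by
    have := Real.add_one_le_exp (δ * c)
    linarith
  have hsplit : (y + 1) ^ (-(1 + δ)) = (y + 1) ^ (-δ) * (y + 1)⁻¹ := by
    rw [← Real.rpow_neg_one (y+1), ← Real.rpow_add hy1]
    ring_nf
  have hpos : (0:ℝ) < (y + 1) ^ (-δ) := Real.rpow_pos_of_pos hy1 _
  have h1 : y ^ (-δ) - (y + 1) ^ (-δ) ≥ (y + 1) ^ (-δ) * (δ * c) := by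
    rw [hkey]; nlinarith
  have h2 : (y + 1) ^ (-δ) * (δ * c) ≥ (y + 1) ^ (-δ) * (δ * (y + 1)⁻¹) := by
    have h3 : δ * (y+1)⁻¹ ≤ δ * c := mul_le_mul_of_nonneg_left hc hδ.le
    exact mul_le_mul_of_nonneg_left h3 hpos.le
  rw [hsplit]; nlinarith

lemma aux_sum (δ : ℝ) (hδ : 0 < δ) (N : ℕ) (hN : 1 ≤ N) :
    ∑ y ∈ Finset.Icc 2 N, ((y:ℝ)) ^ (-(1 + δ)) ≤ (1 - (N:ℝ) ^ (-δ)) / δ := by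
  induction N, hN using Nat.le_induction with
  | base => simp
  | succ N hN ih =>
    rw [Finset.sum_Icc_succ_top (by omega)]
    have hpt := aux_ptwise δ (N:ℝ) hδ (by exact_mod_cast hN)
    have hcast : ((N:ℝ) + 1) = ((N + 1 : ℕ) : ℝ) := by push_cast; ring
    rw [hcast] at hpt
    have hstep : ((N+1:ℕ):ℝ) ^ (-(1+δ)) ≤ ((N:ℝ) ^ (-δ) - ((N+1:ℕ):ℝ) ^ (-δ)) / δ := by
      rw [le_div_iff₀ hδ]; nlinarith
    calc ∑ y ∈ Finset.Icc 2 N, ((y:ℝ)) ^ (-(1+δ)) + ((N+1:ℕ):ℝ) ^ (-(1+δ))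
        ≤ (1 - (N:ℝ) ^ (-δ)) / δ + ((N:ℝ) ^ (-δ) - ((N+1:ℕ):ℝ) ^ (-δ)) / δ :=
          add_le_add ih hstep
      _ = (1 - ((N+1:ℕ):ℝ) ^ (-δ)) / δ := by ring

lemma aux_count (d : ℕ) (hd : 1 ≤ d) (σ : ℕ+ → ℝ) (hσa : Antitone σ)
    (hσ0 : Filter.Tendsto σ Filter.atTop (nhds 0)) (hσ1 : σ 1 = 1)
    (hσ2pos : 0 < σ 2) (hσ2lt : σ 2 < 1)
    (C s : ℝ) (hC : 0 < C) (hs : 0 < s)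
    (hdecay : ∀ n : ℕ+, 2 ≤ n → σ n ≤ C * ((n : ℕ) : ℝ) ^ (-s))
    (δ : ℝ) (hδ0 : 0 < δ) (hδ1 : δ ≤ 1) (t : ℝ) (ht0 : 0 < t) (ht1 : t ≤ 1) :
    {x : Fin d → ℕ+ | t ≤ ∏ j, σ (x j)}.Finite ∧
    (({x : Fin d → ℕ+ | t ≤ ∏ j, σ (x j)}.ncard : ℝ) ≤
      Real.exp (C ^ ((1 + δ) / s) / δ) *
        t ^ (-((1 + δ) / s) - Real.log d / Real.log (σ 2)⁻¹)) := by
  have hd0 : (0:ℝ) < d := by exact_mod_cast Nat.lt_of_lt_of_le Nat.zero_lt_one hd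
  have hd1 : (1:ℝ) ≤ d := by exact_mod_cast hd
  have hσnn : ∀ m : ℕ+, 0 ≤ σ m := fun m =>
    le_of_tendsto hσ0 (Filter.eventually_atTop.2 ⟨m, fun k hk => hσa hk⟩)
  have hσle1 : ∀ m : ℕ+, σ m ≤ 1 := fun m => hσ1 ▸ hσa m.one_le
  set P := (1 + δ) / s with hPdef
  have hP : 0 < P := by positivity
  set K := C ^ P with hKdef
  have hK : 0 < K := Real.rpow_pos_of_pos hC _
  set b := (σ 2)⁻¹ with hbdef
  have hb1 : 1 < b := one_lt_inv_iff₀.mpr ⟨hσ2pos, hσ2lt⟩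
  have hlogb : 0 < Real.log b := Real.log_pos hb1
  set E := {x : Fin d → ℕ+ | t ≤ ∏ j, σ (x j)} with hEdef
  -- coordinatewise lower bound
  have hcoord : ∀ x ∈ E, ∀ j, t ≤ σ (x j) := by
    intro x hx j
    have h1 : ∏ i, σ (x i) = σ (x j) * ∏ i ∈ Finset.univ.erase j, σ (x i) :=
      (Finset.mul_prod_erase Finset.univ _ (Finset.mem_univ j)).symm
    have h2 : ∏ i ∈ Finset.univ.erase j, σ (x i) ≤ 1 :=
      Finset.prod_le_one (fun i _ => hσnn _) (fun i _ => hσle1 _)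
    have h3 : (0:ℝ) ≤ σ (x j) := hσnn _
    calc t ≤ ∏ i, σ (x i) := hx
      _ = σ (x j) * ∏ i ∈ Finset.univ.erase j, σ (x i) := h1
      _ ≤ σ (x j) * 1 := mul_le_mul_of_nonneg_left h2 h3
      _ = σ (x j) := mul_one _
  -- box
  obtain ⟨N, hN⟩ : ∃ N : ℕ+, ∀ y : ℕ+, N ≤ y → σ y < t := by
    have := (hσ0.eventually_lt_const ht0)
    exact Filter.eventually_atTop.1 this
  set box : Finset (Fin d → ℕ+) := Fintype.piFinset (fun _ => Finset.Icc 1 N) with hboxdef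
  have hsub : E ⊆ ↑box := by
    intro x hx
    simp only [hboxdef, Finset.mem_coe, Fintype.mem_piFinset, Finset.mem_Icc]
    intro j
    refine ⟨(x j).one_le, ?_⟩
    by_contra hgt
    push_neg at hgt
    exact absurd (hcoord x hx j) (not_le.2 (hN _ hgt.le))
  have hfin : E.Finite := Set.Finite.subset box.finite_toSet hsub
  refine ⟨hfin, ?_⟩
  -- the weight
  set w : ℕ+ → ℝ := fun y => if y = 1 then 1 else K / d * ((y:ℕ):ℝ) ^ (-(1+δ)) with hwdef
  have hw0 : ∀ y, 0 ≤ w y := by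
    intro y; simp only [hwdef]; split <;> positivity
  set M := -Real.log t / Real.log b with hMdef
  set f : (Fin d → ℕ+) → ℝ := fun x => t ^ (-P) * (d:ℝ) ^ M * ∏ j, w (x j) with hfdef
  have hf0 : ∀ x, 0 ≤ f x := by
    intro x
    have : (0:ℝ) ≤ ∏ j, w (x j) := Finset.prod_nonneg (fun j _ => hw0 _)
    have h1 : (0:ℝ) < t ^ (-P) := Real.rpow_pos_of_pos ht0 _
    have h2 : (0:ℝ) < (d:ℝ) ^ M := Real.rpow_pos_of_pos hd0 _
    positivity
  -- key pointwise bound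
  have hkeyx : ∀ x ∈ E, (1:ℝ) ≤ f x := by
    intro x hx
    set A := Finset.univ.filter (fun j : Fin d => x j ≠ 1) with hAdef
    set m := A.card with hmdef
    have hA2 : ∀ j ∈ A, (2:ℕ+) ≤ x j := by
      intro j hj
      simp only [hAdef, Finset.mem_filter] at hj
      have h1 : (1:ℕ) < (x j : ℕ) := by
        rcases lt_or_eq_of_le (x j).one_le with h | h
        · exact_mod_cast h
        · exact absurd h.symm hj.2
      exact_mod_cast (show (2:ℕ) ≤ (x j : ℕ) by omega)
    have htA : t ≤ ∏ j ∈ A, σ (x j) := by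
      have hsplit := Finset.prod_filter_mul_prod_filter_not Finset.univ
        (fun j : Fin d => x j ≠ 1) (fun j => σ (x j))
      have hone : ∏ j ∈ Finset.univ.filter (fun j : Fin d => ¬ x j ≠ 1), σ (x j) = 1 := by
        apply Finset.prod_eq_one
        intro j hj
        simp only [Finset.mem_filter, not_not] at hj
        rw [hj.2, hσ1]
      have : ∏ j, σ (x j) = ∏ j ∈ A, σ (x j) := by
        rw [← hsplit, hone, mul_one]
      exact this ▸ hx
    -- m ≤ M
    have hσ2m : t ≤ σ 2 ^ m := by
      calc t ≤ ∏ j ∈ A, σ (x j) := htA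
        _ ≤ ∏ j ∈ A, σ 2 := Finset.prod_le_prod (fun j _ => hσnn _)
            (fun j hj => hσa (hA2 j hj))
        _ = σ 2 ^ m := by rw [Finset.prod_const]
    have hmM : (m:ℝ) ≤ M := by
      have hlog : Real.log t ≤ (m:ℝ) * Real.log (σ 2) := by
        calc Real.log t ≤ Real.log (σ 2 ^ m) := Real.log_le_log ht0 hσ2m
          _ = (m:ℝ) * Real.log (σ 2) := by rw [Real.log_pow]
      have hlσ2 : Real.log (σ 2) = -Real.log b := by
        rw [hbdef, Real.log_inv]; ring
      rw [hlσ2] at hlog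
      rw [hMdef, le_div_iff₀ hlogb]
      linarith
    -- decay bound
    have hdA : t ≤ C ^ m * ∏ j ∈ A, ((x j : ℕ):ℝ) ^ (-s) := by
      calc t ≤ ∏ j ∈ A, σ (x j) := htA
        _ ≤ ∏ j ∈ A, (C * ((x j : ℕ):ℝ) ^ (-s)) := Finset.prod_le_prod
            (fun j _ => hσnn _) (fun j hj => hdecay (x j) (hA2 j hj))
        _ = C ^ m * ∏ j ∈ A, ((x j : ℕ):ℝ) ^ (-s) := by
            rw [Finset.prod_mul_distrib, Finset.prod_const]
    -- raise to power P
    have hxpos : ∀ j : Fin d, (0:ℝ) < ((x j : ℕ):ℝ) := by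
      intro j; exact_mod_cast (x j).pos
    have hrp : t ^ P ≤ K ^ m * ∏ j ∈ A, ((x j : ℕ):ℝ) ^ (-(1+δ)) := by
      have h0 : (0:ℝ) ≤ ∏ j ∈ A, ((x j : ℕ):ℝ) ^ (-s) :=
        Finset.prod_nonneg (fun j _ => (Real.rpow_pos_of_pos (hxpos j) _).le)
      have h1 : t ^ P ≤ (C ^ m * ∏ j ∈ A, ((x j : ℕ):ℝ) ^ (-s)) ^ P :=
        Real.rpow_le_rpow ht0.le hdA hP.le
      have h2 : (C ^ m * ∏ j ∈ A, ((x j : ℕ):ℝ) ^ (-s)) ^ P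
          = (C ^ m) ^ P * (∏ j ∈ A, ((x j : ℕ):ℝ) ^ (-s)) ^ P :=
        Real.mul_rpow (by positivity) h0
      have h3 : ((C:ℝ) ^ m) ^ P = K ^ m := by
        rw [← Real.rpow_natCast C m, ← Real.rpow_mul hC.le, mul_comm,
          Real.rpow_mul hC.le, Real.rpow_natCast]
      have h4 : (∏ j ∈ A, ((x j : ℕ):ℝ) ^ (-s)) ^ P
          = ∏ j ∈ A, (((x j : ℕ):ℝ) ^ (-s)) ^ P := by
        rw [← Real.finset_prod_rpow A _ (fun j _ => (Real.rpow_pos_of_pos (hxpos j) _).le)]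
      have h5 : ∀ j ∈ A, (((x j : ℕ):ℝ) ^ (-s)) ^ P = ((x j : ℕ):ℝ) ^ (-(1+δ)) := by
        intro j _
        rw [← Real.rpow_mul (hxpos j).le]
        congr 1
        rw [hPdef]
        field_simp
      calc t ^ P ≤ (C ^ m * ∏ j ∈ A, ((x j : ℕ):ℝ) ^ (-s)) ^ P := h1
        _ = K ^ m * ∏ j ∈ A, (((x j : ℕ):ℝ) ^ (-s)) ^ P := by rw [h2, h3, h4]
        _ = K ^ m * ∏ j ∈ A, ((x j : ℕ):ℝ) ^ (-(1+δ)) := by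
            rw [Finset.prod_congr rfl h5]
    have hprodpos : (0:ℝ) < ∏ j ∈ A, ((x j : ℕ):ℝ) ^ (-(1+δ)) :=
      Finset.prod_pos (fun j _ => Real.rpow_pos_of_pos (hxpos j) _)
    have h1x : 1 ≤ t ^ (-P) * (K ^ m * ∏ j ∈ A, ((x j : ℕ):ℝ) ^ (-(1+δ))) := by
      have htP : (0:ℝ) < t ^ P := Real.rpow_pos_of_pos ht0 _
      have htPn : t ^ (-P) * t ^ P = 1 := by
        rw [← Real.rpow_add ht0]; simp
      have := mul_le_mul_of_nonneg_left hrp (Real.rpow_pos_of_pos ht0 (-P)).le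
      rw [htPn] at this
      exact this
    have h2x : 1 ≤ (d:ℝ) ^ M / (d:ℝ) ^ (m:ℕ) := by
      have hdm : ((d:ℝ)) ^ (m:ℕ) = (d:ℝ) ^ ((m:ℕ):ℝ) := (Real.rpow_natCast _ _).symm
      have h := Real.rpow_le_rpow_of_exponent_le hd1 hmM
      rw [one_le_div (by positivity)]
      rw [hdm]
      exact h
    -- product of weights over univ
    have hprodw : ∏ j, w (x j) = (K / d) ^ m * ∏ j ∈ A, ((x j : ℕ):ℝ) ^ (-(1+δ)) := by
      have hsplit := Finset.prod_filter_mul_prod_filter_not Finset.univ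
        (fun j : Fin d => x j ≠ 1) (fun j => w (x j))
      have hone : ∏ j ∈ Finset.univ.filter (fun j : Fin d => ¬ x j ≠ 1), w (x j) = 1 := by
        apply Finset.prod_eq_one
        intro j hj
        simp only [Finset.mem_filter, not_not] at hj
        simp [hwdef, hj.2]
      have hAval : ∏ j ∈ A, w (x j) = (K / d) ^ m * ∏ j ∈ A, ((x j : ℕ):ℝ) ^ (-(1+δ)) := by
        rw [← Finset.prod_const, ← Finset.prod_mul_distrib]
        apply Finset.prod_congr rfl
        intro j hj
        simp only [hAdef, Finset.mem_filter] at hj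
        simp [hwdef, hj.2]
      rw [← hsplit, hone, mul_one, hAval]
    have heq : f x = ((d:ℝ) ^ M / (d:ℝ) ^ (m:ℕ)) *
        (t ^ (-P) * (K ^ m * ∏ j ∈ A, ((x j : ℕ):ℝ) ^ (-(1+δ)))) := by
      rw [hfdef]
      simp only []
      rw [hprodw, div_pow]
      field_simp
    rw [heq]
    have := mul_le_mul h2x h1x zero_le_one (le_trans zero_le_one h2x)
    linarith
  -- sum the bound
  have hcard : ((E.ncard : ℝ)) ≤ ∑ x ∈ box, f x := by
    have h1 : E.ncard = hfin.toFinset.card := Set.ncard_eq_toFinset_card _ hfin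
    have h2 : (hfin.toFinset.card : ℝ) ≤ ∑ x ∈ hfin.toFinset, f x := by
      calc (hfin.toFinset.card : ℝ) = ∑ x ∈ hfin.toFinset, (1:ℝ) := by
            rw [Finset.sum_const]; simp
        _ ≤ ∑ x ∈ hfin.toFinset, f x := Finset.sum_le_sum
            (fun x hx => hkeyx x (hfin.mem_toFinset.1 hx))
    have h3 : ∑ x ∈ hfin.toFinset, f x ≤ ∑ x ∈ box, f x :=
      Finset.sum_le_sum_of_subset_of_nonneg
        (fun x hx => hsub (hfin.mem_toFinset.1 hx)) (fun x _ _ => hf0 x)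
    rw [h1]; linarith
  -- factor the sum
  have hfactor : ∑ x ∈ box, f x
      = t ^ (-P) * (d:ℝ) ^ M * (∑ y ∈ Finset.Icc (1:ℕ+) N, w y) ^ d := by
    rw [hfdef]
    simp only []
    rw [← Finset.mul_sum]
    congr 1
    rw [← Finset.prod_univ_sum]
    rw [Finset.prod_const, Finset.card_univ, Fintype.card_fin]
  -- bound the one-dimensional sum
  have hwsum : ∑ y ∈ Finset.Icc (1:ℕ+) N, w y ≤ 1 + K / (d * δ) := by
    have hins : Finset.Icc (1:ℕ+) N = insert 1 (Finset.Icc 2 N) := by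
      ext y
      simp only [Finset.mem_Icc, Finset.mem_insert]
      constructor
      · rintro ⟨-, h2⟩
        rcases eq_or_lt_of_le y.one_le with h | h
        · exact Or.inl h.symm
        · refine Or.inr ⟨?_, h2⟩
          exact_mod_cast (show (2:ℕ) ≤ (y:ℕ) by
            have : (1:ℕ) < (y:ℕ) := by exact_mod_cast h
            omega)
      · rintro (rfl | ⟨h2, h3⟩)
        · exact ⟨le_refl _, N.one_le⟩
        · exact ⟨y.one_le, h3⟩
    have hnotmem : (1:ℕ+) ∉ Finset.Icc (2:ℕ+) N := by
      simp only [Finset.mem_Icc]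
      rintro ⟨h, -⟩
      exact absurd h (by norm_num)
    rw [hins, Finset.sum_insert hnotmem]
    have hw1 : w 1 = 1 := by simp [hwdef]
    have hwy : ∀ y ∈ Finset.Icc (2:ℕ+) N, w y = K / d * ((y:ℕ):ℝ) ^ (-(1+δ)) := by
      intro y hy
      simp only [Finset.mem_Icc] at hy
      have : y ≠ 1 := by
        intro h
        rw [h] at hy
        exact absurd hy.1 (by norm_num)
      simp [hwdef, this]
    rw [hw1, Finset.sum_congr rfl hwy, ← Finset.mul_sum]
    have hmap : ∑ y ∈ Finset.Icc (2:ℕ+) N, ((y:ℕ):ℝ) ^ (-(1+δ))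
        = ∑ m ∈ Finset.Icc (2:ℕ) (N:ℕ), ((m:ℕ):ℝ) ^ (-(1+δ)) := by
      have hemb := (Finset.sum_map (Finset.Icc (2:ℕ+) N)
        (Function.Embedding.subtype _) (fun m : ℕ => (m:ℝ) ^ (-(1+δ)))).symm
      erw [PNat.map_subtype_embedding_Icc] at hemb
      exact hemb
    have hsum1 : ∑ m ∈ Finset.Icc (2:ℕ) (N:ℕ), ((m:ℕ):ℝ) ^ (-(1+δ)) ≤ 1 / δ := by
      have h := aux_sum δ hδ0 (N:ℕ) N.one_le
      have ha : (0:ℝ) ≤ ((N:ℕ):ℝ) ^ (-δ) := Real.rpow_nonneg (by positivity) _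
      have hNd : (1 - ((N:ℕ):ℝ) ^ (-δ)) / δ ≤ 1 / δ :=
        (div_le_div_iff_of_pos_right hδ0).mpr (by linarith)
      exact le_trans (by exact_mod_cast h) hNd
    have : K / d * ∑ y ∈ Finset.Icc (2:ℕ+) N, ((y:ℕ):ℝ) ^ (-(1+δ)) ≤ K / d * (1/δ) := by
      apply mul_le_mul_of_nonneg_left _ (by positivity)
      rw [hmap]; exact hsum1
    have heq : K / d * (1/δ) = K / (d * δ) := by field_simp
    linarith [heq ▸ this]
  -- assemble
  have hpowd : (∑ y ∈ Finset.Icc (1:ℕ+) N, w y) ^ d ≤ Real.exp (K / δ) := by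
    have hnn : (0:ℝ) ≤ ∑ y ∈ Finset.Icc (1:ℕ+) N, w y :=
      Finset.sum_nonneg (fun y _ => hw0 y)
    have h1 : (∑ y ∈ Finset.Icc (1:ℕ+) N, w y) ^ d ≤ (1 + K / (d * δ)) ^ d :=
      pow_le_pow_left₀ hnn hwsum d
    have h2 : (1 + K / (d * δ)) ≤ Real.exp (K / (d * δ)) := by
      have := Real.add_one_le_exp (K / (d * δ))
      linarith
    have h3 : (1 + K / (d * δ)) ^ d ≤ (Real.exp (K / (d * δ))) ^ d :=
      pow_le_pow_left₀ (by positivity) h2 d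
    have h4 : (Real.exp (K / (d * δ))) ^ d = Real.exp ((d:ℝ) * (K / (d * δ))) :=
      (Real.exp_nat_mul _ d).symm
    have h5 : (d:ℝ) * (K / (d * δ)) = K / δ := by
      field_simp
    calc (∑ y ∈ Finset.Icc (1:ℕ+) N, w y) ^ d ≤ (1 + K / (d * δ)) ^ d := h1
      _ ≤ (Real.exp (K / (d * δ))) ^ d := h3
      _ = Real.exp (K / δ) := by rw [h4, h5]
  have hdM : (d:ℝ) ^ M = t ^ (-(Real.log d / Real.log b)) := by
    rw [Real.rpow_def_of_pos hd0, Real.rpow_def_of_pos ht0, hMdef]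
    congr 1
    ring
  have hfinal : ((E.ncard : ℝ)) ≤ Real.exp (K / δ) * t ^ (-P - Real.log d / Real.log b) := by
    have h1 : (0:ℝ) ≤ t ^ (-P) * (d:ℝ) ^ M := by positivity
    have h2 : ∑ x ∈ box, f x ≤ t ^ (-P) * (d:ℝ) ^ M * Real.exp (K / δ) := by
      rw [hfactor]
      exact mul_le_mul_of_nonneg_left hpowd h1
    have h3 : t ^ (-P) * (d:ℝ) ^ M * Real.exp (K / δ)
        = Real.exp (K / δ) * t ^ (-P - Real.log d / Real.log b) := by
      rw [hdM, ← Real.rpow_add ht0]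
      ring_nf
    calc ((E.ncard : ℝ)) ≤ ∑ x ∈ box, f x := hcard
      _ ≤ t ^ (-P) * (d:ℝ) ^ M * Real.exp (K / δ) := h2
      _ = Real.exp (K / δ) * t ^ (-P - Real.log d / Real.log b) := h3
  exact hfinal

theorem stmt_9 (d : ℕ) (hd : 1 ≤ d) (σ τ : ℕ+ → ℝ)
    (hσa : Antitone σ) (hσ0 : Filter.Tendsto σ Filter.atTop (nhds 0))
    (hσ1 : σ 1 = 1) (hσ2pos : 0 < σ 2) (hσ2lt : σ 2 < 1)
    (hτa : Antitone τ)
    -- τ is the nonincreasing rearrangement of the d-th tensor power of σ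
    (hre : ∀ t : ℝ, 0 < t →
      {n : ℕ+ | t ≤ τ n}.ncard = {x : Fin d → ℕ+ | t ≤ ∏ j, σ (x j)}.ncard)
    (C s : ℝ) (hC : 0 < C) (hs : 0 < s)
    (hdecay : ∀ n : ℕ+, 2 ≤ n → σ n ≤ C * ((n : ℕ) : ℝ) ^ (-s))
    (δ : ℝ) (hδ0 : 0 < δ) (hδ1 : δ ≤ 1) (n : ℕ+) :
    τ n ≤ (Real.exp (C ^ ((1 + δ) / s) / δ) / ((n : ℕ) : ℝ)) ^
      (Real.log (σ 2)⁻¹ / Real.log ((σ 2) ^ (-(1 + δ) / s) * (d : ℝ))) := by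
  have hd0 : (0:ℝ) < d := by exact_mod_cast Nat.lt_of_lt_of_le Nat.zero_lt_one hd
  have hd1 : (1:ℝ) ≤ d := by exact_mod_cast hd
  have hσnn : ∀ m : ℕ+, 0 ≤ σ m := fun m =>
    le_of_tendsto hσ0 (Filter.eventually_atTop.2 ⟨m, fun k hk => hσa hk⟩)
  have hσle1 : ∀ m : ℕ+, σ m ≤ 1 := fun m => hσ1 ▸ hσa m.one_le
  have hn1 : (1:ℝ) ≤ ((n:ℕ):ℝ) := by exact_mod_cast n.one_le
  set P := (1 + δ) / s with hPdef
  have hP : 0 < P := by rw [hPdef]; positivity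
  set K := C ^ P with hKdef
  have hK : 0 < K := Real.rpow_pos_of_pos hC _
  set b := (σ 2)⁻¹ with hbdef
  have hb1 : 1 < b := one_lt_inv_iff₀.mpr ⟨hσ2pos, hσ2lt⟩
  have hlogb : 0 < Real.log b := Real.log_pos hb1
  have hlogd : 0 ≤ Real.log d := Real.log_nonneg hd1
  set L := Real.log d / Real.log b with hLdef
  have hL : 0 ≤ L := div_nonneg hlogd hlogb.le
  set D := Real.log ((σ 2) ^ (-(1 + δ) / s) * d) with hDdef
  have hD : D = P * Real.log b + Real.log d := by
    rw [hDdef, Real.log_mul (Real.rpow_pos_of_pos hσ2pos _).ne' hd0.ne',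
      Real.log_rpow hσ2pos]
    have hlσ2 : Real.log (σ 2) = -Real.log b := by rw [hbdef, Real.log_inv]; ring
    rw [hlσ2, hPdef]; ring
  have hDpos : 0 < D := by
    have := mul_pos hP hlogb
    rw [hD]; linarith
  set α := Real.log b / D with hαdef
  have hα : 0 < α := div_pos hlogb hDpos
  have hPL : P + L = D / Real.log b := by
    rw [hD, hLdef]; field_simp
  have hmul : α * (P + L) = 1 := by
    rw [hαdef, hPL]; field_simp
  set base := Real.exp (K / δ) / ((n:ℕ):ℝ) with hbasedef
  have hbase : 0 < base := by rw [hbasedef]; positivity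
  by_contra hcon
  push_neg at hcon
  have hT : 0 < base ^ α := Real.rpow_pos_of_pos hbase _
  have hEne : ∀ u : ℝ, u ≤ 1 → {x : Fin d → ℕ+ | u ≤ ∏ j, σ (x j)}.Nonempty := by
    intro u hu
    refine ⟨fun _ => 1, ?_⟩
    simpa [hσ1] using hu
  have hcount := fun (t : ℝ) ht0 ht1 =>
    aux_count d hd σ hσa hσ0 hσ1 hσ2pos hσ2lt C s hC hs hdecay δ hδ0 hδ1 t ht0 ht1
  have hτ1 : τ n ≤ 1 := by
    by_contra h1
    push_neg at h1
    set u := (1 + τ n) / 2 with hudef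
    have hu1 : 1 < u := by rw [hudef]; linarith
    have hu0 : 0 < u := by linarith
    have hEu : {x : Fin d → ℕ+ | u ≤ ∏ j, σ (x j)} = ∅ := by
      apply Set.eq_empty_iff_forall_notMem.mpr
      intro x hx
      have hle : ∏ j, σ (x j) ≤ 1 :=
        Finset.prod_le_one (fun j _ => hσnn _) (fun j _ => hσle1 _)
      simp only [Set.mem_setOf_eq] at hx
      linarith
    have hS := hre u hu0
    rw [hEu] at hS
    simp only [Set.ncard_empty] at hS
    rcases Set.finite_or_infinite {k : ℕ+ | u ≤ τ k} with hf | hinf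
    · have hne : {k : ℕ+ | u ≤ τ k}.Nonempty := ⟨n, by simp only [Set.mem_setOf_eq]; linarith⟩
      have := (Set.ncard_pos hf).mpr hne
      omega
    · have hall : ∀ k : ℕ+, 1 ≤ τ k := by
        intro k
        obtain ⟨m, hm, hkm⟩ : ∃ m, m ∈ {k : ℕ+ | u ≤ τ k} ∧ k ≤ m := by
          by_contra hno
          push_neg at hno
          apply hinf
          apply Set.Finite.subset (Finset.Icc (1:ℕ+) k).finite_toSet
          intro m hm
          simp only [Finset.coe_Icc, Set.mem_Icc]
          exact ⟨m.one_le, (hno m hm).le⟩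
        have h2 : τ m ≤ τ k := hτa hkm
        have h3 : u ≤ τ m := hm
        linarith
      have hS1 : {k : ℕ+ | 1 ≤ τ k} = Set.univ := Set.eq_univ_of_forall hall
      have h2 := hre 1 one_pos
      rw [hS1, Set.ncard_univ, Nat.card_eq_zero_of_infinite] at h2
      obtain ⟨hfin1, -⟩ := hcount 1 one_pos le_rfl
      have := (Set.ncard_pos hfin1).mpr (hEne 1 le_rfl)
      exact this.ne' h2.symm
  have ht0 : 0 < τ n := lt_trans hT hcon
  obtain ⟨hEfin, hEcard⟩ := hcount (τ n) ht0 hτ1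
  have hSn := hre (τ n) ht0
  rcases Set.finite_or_infinite {k : ℕ+ | τ n ≤ τ k} with hSf | hSinf
  · have hsubS : (↑(Finset.Icc (1:ℕ+) n) : Set ℕ+) ⊆ {k : ℕ+ | τ n ≤ τ k} := by
      intro m hm
      simp only [Finset.coe_Icc, Set.mem_Icc] at hm
      exact hτa hm.2
    have hcardIcc : (↑(Finset.Icc (1:ℕ+) n) : Set ℕ+).ncard = (n:ℕ) := by
      rw [Set.ncard_coe_finset, PNat.card_Icc]
      simp
    have hge : (n:ℕ) ≤ {k : ℕ+ | τ n ≤ τ k}.ncard := by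
      rw [← hcardIcc]
      exact Set.ncard_le_ncard hsubS hSf
    have hchain : ((n:ℕ):ℝ) ≤ Real.exp (K / δ) * (τ n) ^ (-P - L) := by
      calc ((n:ℕ):ℝ) ≤ ({k : ℕ+ | τ n ≤ τ k}.ncard : ℝ) := by exact_mod_cast hge
        _ = ({x : Fin d → ℕ+ | τ n ≤ ∏ j, σ (x j)}.ncard : ℝ) := by rw [hSn]
        _ ≤ Real.exp (K / δ) * (τ n) ^ (-P - L) := hEcard
    have hneg : -P - L < 0 := by linarith
    have hstrict : (τ n) ^ (-P - L) < (base ^ α) ^ (-P - L) :=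
      Real.rpow_lt_rpow_of_neg hT hcon hneg
    have hTval : (base ^ α) ^ (-P - L) = ((n:ℕ):ℝ) / Real.exp (K / δ) := by
      rw [← Real.rpow_mul hbase.le]
      rw [show α * (-P - L) = -(α * (P + L)) by ring, hmul]
      rw [show (-(1:ℝ)) = ((-1 : ℝ)) by norm_num, Real.rpow_neg_one, hbasedef, inv_div]
    have hexp_pos : (0:ℝ) < Real.exp (K / δ) := Real.exp_pos _
    have hfinal : ((n:ℕ):ℝ) < ((n:ℕ):ℝ) := by
      calc ((n:ℕ):ℝ) ≤ Real.exp (K / δ) * (τ n) ^ (-P - L) := hchain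
        _ < Real.exp (K / δ) * ((base ^ α) ^ (-P - L)) :=
            mul_lt_mul_of_pos_left hstrict hexp_pos
        _ = ((n:ℕ):ℝ) := by rw [hTval]; field_simp
    exact absurd hfinal (lt_irrefl _)
  · rw [hSinf.ncard] at hSn
    have := (Set.ncard_pos hEfin).mpr (hEne _ hτ1)
    exact this.ne' hSn.symm
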